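/- Let G be an abelian p-group and H = ⊕ᵢ₌₁ⁿ ⟨zᵢ⟩ a finite subgroup with H ∩ p^ω G = 0, where zᵢ has exponent eᵢ. If (a) whenever eⱼ ≤ eᵢ one has U(zᵢ) ≤ U(zⱼ) ≤ U(p^{eᵢ−eⱼ}zᵢ) and (b) the direct sum is a valuated direct sum, then every endomorphism of H extends to an endomorphism of G. -/

import Mathlib

open AddSubgroup

/-- The `p`-height of an element, as an extended natural number. -/
noncomputable def pHeight (p : ℕ) {G : Type*} [AddCommGroup G] (x : G) : ℕ∞ :=
  sSup {n : ℕ∞ | ∃ m : ℕ, n = (m : ℕ∞) ∧ ∃ y : G, p ^ m • y = x}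

/-- `G` is an abelian `p`-group. -/
def IsPGrp (p : ℕ) (G : Type*) [AddCommGroup G] : Prop :=
  ∀ x : G, ∃ n : ℕ, p ^ n • x = 0

/-- `H ∈ Q(G)`: every homomorphism `H → G` extends to an endomorphism of `G`. -/
def InQ {G : Type*} [AddCommGroup G] (H : AddSubgroup G) : Prop :=
  ∀ f : H →+ G, ∃ g : G →+ G, ∀ x : H, g x = f x

/-- `H ∈ P(G)`: every monomorphism `H → G` extends to an endomorphism of `G`. -/
def InP {G : Type*} [AddCommGroup G] (H : AddSubgroup G) : Prop :=
  ∀ f : H →+ G, Function.Injective f → ∃ g : G →+ G, ∀ x : H, g x = f x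

/-- `H ∈ W(G)`: every endomorphism of `H` extends to an endomorphism of `G`. -/
def InW {G : Type*} [AddCommGroup G] (H : AddSubgroup G) : Prop :=
  ∀ f : H →+ H, ∃ g : G →+ G, ∀ x : H, g x = (f x : G)

/-- `K` is an internal direct sum of cyclic subgroups. -/
def IsDirectSumOfCyclics {G : Type*} [AddCommGroup G] (K : AddSubgroup G) : Prop :=
  ∃ (ι : Type) (a : ι → G), (∀ i, a i ∈ K) ∧ (⨆ i, zmultiples (a i)) = K ∧
    iSupIndep (fun i => zmultiples (a i))

/-- `K` is a `p`-pure subgroup: `pⁿG ∩ K = pⁿK`. -/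
def IsPure (p : ℕ) {G : Type*} [AddCommGroup G] (K : AddSubgroup G) : Prop :=
  ∀ n : ℕ, ∀ x ∈ K, (∃ y : G, p ^ n • y = x) → ∃ z ∈ K, p ^ n • z = x

/-- The quotient `G/K` is divisible (equivalently `G = K + pG`). -/
def QuotDivisible (p : ℕ) {G : Type*} [AddCommGroup G] (K : AddSubgroup G) : Prop :=
  ∀ x : G, ∃ y : G, x - p • y ∈ K

/-- The Ulm sequence of `x` has a gap before index `k` (with `h₋₁ = -1`). -/
def HasGapBefore (p : ℕ) {G : Type*} [AddCommGroup G] (x : G) (k : ℕ) : Prop :=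
  if k = 0 then 0 < pHeight p x
  else pHeight p (p ^ (k - 1) • x) + 1 < pHeight p (p ^ k • x)


namespace S13

theorem enat_eq_top (a : ℕ∞) (h : ∀ m : ℕ, (m : ℕ∞) ≤ a) : a = ⊤ := by
  induction a using ENat.recTopCoe with
  | top => rfl
  | coe n =>
    have := h (n + 1)
    exact absurd (by exact_mod_cast this) (by omega)

theorem enat_le_of {a b : ℕ∞} (h : ∀ m : ℕ, (m : ℕ∞) ≤ a → (m : ℕ∞) ≤ b) : a ≤ b := by
  induction a using ENat.recTopCoe with
  | top =>
    rw [enat_eq_top b (fun m => h m le_top)]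
  | coe n => exact h n le_rfl

variable {p : ℕ} {G : Type*} [AddCommGroup G]

theorem le_pHeight_iff {m : ℕ} {x : G} :
    (m : ℕ∞) ≤ pHeight p x ↔ ∃ y : G, p ^ m • y = x := by
  constructor
  · intro h
    by_contra hx
    rcases Nat.eq_zero_or_pos m with rfl | hm
    · exact hx ⟨x, by simp⟩
    have hub : ∀ t ∈ {n : ℕ∞ | ∃ m' : ℕ, n = (m' : ℕ∞) ∧ ∃ y : G, p ^ m' • y = x},
        t ≤ ((m - 1 : ℕ) : ℕ∞) := by
      rintro t ⟨k, rfl, y, hy⟩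
      have hk : k ≤ m - 1 := by
        by_contra hk
        push_neg at hk
        refine hx ⟨p ^ (k - m) • y, ?_⟩
        rw [smul_smul, ← pow_add]
        rw [show m + (k - m) = k by omega, hy]
      exact_mod_cast hk
    have h2 : pHeight p x ≤ ((m - 1 : ℕ) : ℕ∞) := sSup_le hub
    have h3 : (m : ℕ∞) ≤ ((m - 1 : ℕ) : ℕ∞) := le_trans h h2
    exact absurd (by exact_mod_cast h3) (by omega)
  · rintro ⟨y, hy⟩
    exact le_sSup ⟨m, rfl, y, hy⟩

theorem pHeight_zero_eq_top : pHeight p (0 : G) = ⊤ :=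
  enat_eq_top _ (fun m => le_pHeight_iff.2 ⟨0, smul_zero _⟩)

theorem pHeight_mono {G' : Type*} [AddCommGroup G'] {x : G} {x' : G'}
    (h : ∀ m : ℕ, (∃ y : G, p ^ m • y = x) → ∃ y' : G', p ^ m • y' = x') :
    pHeight p x ≤ pHeight p x' :=
  enat_le_of (fun m hm => le_pHeight_iff.2 (h m (le_pHeight_iff.1 hm)))

theorem pHeight_le_hom {G' : Type*} [AddCommGroup G'] (g : G →+ G') (x : G) :
    pHeight p x ≤ pHeight p (g x) :=
  pHeight_mono (fun m ⟨y, hy⟩ => ⟨g y, by rw [← map_nsmul, hy]⟩)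

theorem pHeight_le_zsmul (m : ℤ) (x : G) : pHeight p x ≤ pHeight p (m • x) :=
  pHeight_le_hom (AddMonoidHom.mk' (fun w => m • w) (fun a b => smul_add m a b)) x

theorem pHeight_neg (x : G) : pHeight p (-x) = pHeight p x := by
  refine le_antisymm ?_ ?_
  · have := pHeight_le_zsmul (p := p) (-1 : ℤ) (-x)
    simpa using this
  · have := pHeight_le_zsmul (p := p) (-1 : ℤ) x
    simpa using this

theorem min_pHeight_le_add (x y : G) :
    min (pHeight p x) (pHeight p y) ≤ pHeight p (x + y) := by
  refine enat_le_of (fun m hm => ?_)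
  rw [le_min_iff] at hm
  obtain ⟨y1, h1⟩ := le_pHeight_iff.1 hm.1
  obtain ⟨y2, h2⟩ := le_pHeight_iff.1 hm.2
  exact le_pHeight_iff.2 ⟨y1 + y2, by rw [smul_add, h1, h2]⟩

theorem min_pHeight_le_sub (x y : G) :
    min (pHeight p x) (pHeight p y) ≤ pHeight p (x - y) := by
  have := min_pHeight_le_add (p := p) x (-y)
  rw [pHeight_neg (p := p) y] at this
  simpa [sub_eq_add_neg] using this

theorem pHeight_pow_smul_le (k : ℕ) (x : G) :
    (k : ℕ∞) + pHeight p x ≤ pHeight p (p ^ k • x) := by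
  have key : ∀ m : ℕ, (m : ℕ∞) ≤ pHeight p x → ((k + m : ℕ) : ℕ∞) ≤ pHeight p (p ^ k • x) := by
    intro m hm
    obtain ⟨y, hy⟩ := le_pHeight_iff.1 hm
    refine le_pHeight_iff.2 ⟨y, ?_⟩
    rw [pow_add, mul_smul, hy]
  rcases h : pHeight p x with _ | n
  · have htop : pHeight p (p ^ k • x) = ⊤ := by
      refine enat_eq_top _ (fun M => ?_)
      have := key M (by rw [h]; exact le_top)
      exact le_trans (by exact_mod_cast Nat.le_add_left M k) this
    rw [htop]
    exact le_top
  · have := key n (le_of_eq h.symm)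
    refine le_trans (le_of_eq ?_) this
    show (k : ℕ∞) + (n : ℕ∞) = ((k + n : ℕ) : ℕ∞)
    exact_mod_cast rfl

theorem le_pHeight_pow_self (k : ℕ) (x : G) : (k : ℕ∞) ≤ pHeight p (p ^ k • x) :=
  le_pHeight_iff.2 ⟨x, rfl⟩

theorem pHeight_unit_zsmul (hp : p.Prime) {u : ℤ} (hu : ¬(p : ℤ) ∣ u) {x : G} {κ : ℕ}
    (hx : p ^ κ • x = 0) : pHeight p (u • x) = pHeight p x := by
  refine le_antisymm ?_ (pHeight_le_zsmul u x)
  have hpz : Prime (p : ℤ) := Nat.prime_iff_prime_int.1 hp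
  have hc : IsCoprime u ((p : ℤ) ^ κ) := ((hpz.coprime_iff_not_dvd.2 hu).symm).pow_right
  obtain ⟨α, β, hab⟩ := hc
  have hxx : x = α • (u • x) := by
    have h0 : ((p : ℤ) ^ κ) • x = 0 := by
      rw [show ((p : ℤ) ^ κ) = ((p ^ κ : ℕ) : ℤ) by push_cast; ring, natCast_zsmul, hx]
    calc x = (1 : ℤ) • x := (one_smul _ _).symm
    _ = (α * u + β * (p : ℤ) ^ κ) • x := by rw [hab]
    _ = α • (u • x) + β • (((p : ℤ) ^ κ) • x) := by
        rw [add_smul, mul_smul, mul_smul]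
    _ = α • (u • x) := by rw [h0, smul_zero, add_zero]
  calc pHeight p (u • x) ≤ pHeight p (α • (u • x)) := pHeight_le_zsmul α (u • x)
  _ = pHeight p x := by rw [← hxx]

theorem le_pHeight_finsum {ι : Type*} {s : Finset ι} {c : ι → G} {m : ℕ}
    (h : ∀ i ∈ s, (m : ℕ∞) ≤ pHeight p (c i)) : (m : ℕ∞) ≤ pHeight p (∑ i ∈ s, c i) := by
  classical
  induction s using Finset.induction_on with
  | empty => rw [Finset.sum_empty, pHeight_zero_eq_top]; exact le_top
  | insert _ _ hnotmem ih =>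
    rename_i a s
    rw [Finset.sum_insert hnotmem]
    refine le_trans ?_ (min_pHeight_le_add _ _)
    exact le_min (h a (Finset.mem_insert_self a s))
      (ih (fun i hi => h i (Finset.mem_insert_of_mem hi)))

end S13
namespace S13

universe u
variable {p : ℕ}

theorem cyclicHom {G : Type*} [AddCommGroup G] {Γ : Type*} [AddCommGroup Γ] (v : Γ) (c₀ : G)
    (hcomp : ∀ mm : ℤ, mm • v = 0 → mm • c₀ = 0) :
    ∃ θ : (Submodule.span ℤ ({v} : Set Γ)) →+ G,
      ∀ (mm : ℤ) (h : mm • v ∈ Submodule.span ℤ ({v} : Set Γ)), θ ⟨mm • v, h⟩ = mm • c₀ := by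
  classical
  have hrep : ∀ a : Submodule.span ℤ ({v} : Set Γ), ∃ m : ℤ, m • v = (a : Γ) :=
    fun a => Submodule.mem_span_singleton.1 a.2
  set F : Submodule.span ℤ ({v} : Set Γ) → G :=
    fun a => (Classical.choose (hrep a)) • c₀ with hF
  have hkey : ∀ (a : Submodule.span ℤ ({v} : Set Γ)) (m : ℤ), m • v = (a : Γ) → F a = m • c₀ := by
    intro a m hm
    have h1 := Classical.choose_spec (hrep a)
    have h2 : (Classical.choose (hrep a) - m) • v = 0 := by
      rw [sub_smul, h1, hm, sub_self]
    have h3 := hcomp _ h2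
    rw [sub_smul, sub_eq_zero] at h3
    rw [hF]
    exact h3
  refine ⟨AddMonoidHom.mk' F ?_, ?_⟩
  · intro a b
    obtain ⟨ma, hma⟩ := hrep a
    obtain ⟨mb, hmb⟩ := hrep b
    have hab : (ma + mb) • v = ((a + b : _) : Γ) := by
      push_cast
      rw [add_smul, hma, hmb]
    rw [hkey _ _ hab, hkey _ _ hma, hkey _ _ hmb, add_smul]
  · intro mm h
    exact hkey _ _ rfl

theorem complement (hp : p.Prime) {Γ : Type*} [AddCommGroup Γ]
    (htor : ∀ w : Γ, ∃ κ : ℕ, p ^ κ • w = 0) (v : Γ) (N : ℕ)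
    (hvN : p ^ N • v = 0) (hvne : p ^ (N - 1) • v ≠ 0)
    (hdisj : ∀ (mm : ℤ) (y : Γ), mm • v = p ^ N • y → mm • v = 0) :
    ∃ C : Submodule ℤ Γ, IsCompl (Submodule.span ℤ ({v} : Set Γ)) C := by
  classical
  have hpz : Prime (p : ℤ) := Nat.prime_iff_prime_int.1 hp
  have ncast : ∀ (k : ℕ) (w : Γ), (p ^ k : ℕ) • w = ((p : ℤ) ^ k) • w := by
    intro k w
    rw [show ((p : ℤ) ^ k) = ((p ^ k : ℕ) : ℤ) by push_cast; ring, natCast_zsmul]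
  have hN : 1 ≤ N := by
    by_contra h
    have hN0 : N = 0 := by omega
    apply hvne
    rw [hN0] at hvN ⊢
    exact hvN
  set A : Submodule ℤ Γ := Submodule.span ℤ ({v} : Set Γ) with hA
  have hmemA : ∀ mm : ℤ, mm • v ∈ A := by
    intro mm
    exact Submodule.smul_mem _ mm (Submodule.mem_span_singleton_self v)
  set s : Set (Submodule ℤ Γ) :=
    {C | (∀ y : Γ, p ^ N • y ∈ C) ∧ A ⊓ C = ⊥} with hs
  set B : Submodule ℤ Γ :=
    { carrier := {w | ∃ y : Γ, p ^ N • y = w}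
      zero_mem' := ⟨0, smul_zero _⟩
      add_mem' := by
        rintro w1 w2 ⟨y1, hy1⟩ ⟨y2, hy2⟩
        exact ⟨y1 + y2, by rw [smul_add, hy1, hy2]⟩
      smul_mem' := by
        rintro c w ⟨y, hy⟩
        refine ⟨c • y, ?_⟩
        rw [ncast, smul_comm, ← ncast, hy] } with hB
  have hBs : B ∈ s := by
    constructor
    · intro y
      exact ⟨y, rfl⟩
    · rw [eq_bot_iff]
      rintro w ⟨hw1, hw2⟩
      obtain ⟨mm, hmm⟩ := Submodule.mem_span_singleton.1 hw1
      obtain ⟨y, hy⟩ := hw2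
      have h0 : mm • v = 0 := hdisj mm y (by rw [hmm, ← hy])
      rw [Submodule.mem_bot, ← hmm]
      exact h0
  -- Zorn
  have hchainub : ∀ c ⊆ s, IsChain (· ≤ ·) c → ∀ y ∈ c, ∃ ub ∈ s, ∀ z ∈ c, z ≤ ub := by
    intro c hcs hchain y hyc
    refine ⟨sSup c, ⟨?_, ?_⟩, fun z hz => le_sSup hz⟩
    · intro w
      exact (le_sSup hyc) ((hcs hyc).1 w)
    · rw [eq_bot_iff]
      rintro w ⟨hw1, hw2⟩
      rw [SetLike.mem_coe, Submodule.mem_sSup_of_directed ⟨y, hyc⟩ hchain.directedOn] at hw2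
      obtain ⟨D, hDc, hwD⟩ := hw2
      have hwAD : w ∈ A ⊓ D := ⟨hw1, hwD⟩
      rw [(hcs hDc).2] at hwAD
      exact hwAD
  obtain ⟨M, hBM, hMs, hMmax⟩ : ∃ M, B ≤ M ∧ M ∈ s ∧ ∀ C ∈ s, M ≤ C → C = M := by
    obtain ⟨M, hBM, hMmax⟩ := zorn_le_nonempty₀ s hchainub B hBs
    exact ⟨M, hBM, hMmax.1, fun C hC hMC => le_antisymm (hMmax.2 hC hMC) hMC⟩
  -- main claim : A ⊔ M = ⊤
  have hdisjAM : A ⊓ M = ⊥ := hMs.2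
  have hstep : ∀ x : Γ, p • x ∈ A ⊔ M → x ∈ A ⊔ M := by
    intro x hpx
    by_contra hx
    obtain ⟨w, hw, cc, hcc, hsum⟩ := Submodule.mem_sup.1 hpx
    obtain ⟨mm, rfl⟩ := Submodule.mem_span_singleton.1 hw
    by_cases hpm : (p : ℤ) ∣ mm
    · -- reduce to p • x' ∈ M and use maximality
      obtain ⟨m', rfl⟩ := hpm
      set x' : Γ := x - m' • v with hx'
      have hpx' : p • x' = cc := by
        rw [hx', smul_sub]
        have h1 : p • (m' • v) = ((p : ℤ) * m') • v := by
          rw [mul_smul, natCast_zsmul]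
        rw [h1, ← hsum]
        abel
      have hx'notin : x' ∉ A ⊔ M := by
        intro hmem
        apply hx
        have : x = x' + m' • v := by rw [hx']; abel
        rw [this]
        exact add_mem hmem (Submodule.mem_sup_left (hmemA m'))
      -- maximality: A ⊓ (M ⊔ span x') ≠ ⊥
      have hMx' : M ⊔ Submodule.span ℤ ({x'} : Set Γ) ∉ s := by
        intro hmem
        have hle : M ≤ M ⊔ Submodule.span ℤ ({x'} : Set Γ) := le_sup_left
        have := hMmax _ hmem hle
        apply hx'notin
        have hx'in : x' ∈ M ⊔ Submodule.span ℤ ({x'} : Set Γ) :=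
          Submodule.mem_sup_right (Submodule.mem_span_singleton_self x')
        rw [this] at hx'in
        exact Submodule.mem_sup_right hx'in
      have hne : A ⊓ (M ⊔ Submodule.span ℤ ({x'} : Set Γ)) ≠ ⊥ := by
        intro hb
        exact hMx' ⟨fun y => Submodule.mem_sup_left ((hMs.1) y), hb⟩
      obtain ⟨α, hαmem, hαne⟩ := Submodule.exists_mem_ne_zero_of_ne_bot (by
        intro hb
        exact hne hb)
      obtain ⟨hαA, hαM'⟩ := hαmem
      obtain ⟨c₁, hc₁, w', hw', hww⟩ := Submodule.mem_sup.1 hαM'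
      obtain ⟨sα, rfl⟩ := Submodule.mem_span_singleton.1 hw'
      by_cases hps : (p : ℤ) ∣ sα
      · obtain ⟨s', rfl⟩ := hps
        have hsx : ((p : ℤ) * s') • x' = s' • cc := by
          rw [mul_comm, mul_smul, natCast_zsmul, hpx']
        have hαinM : α ∈ M := by
          rw [← hww, hsx]
          exact add_mem hc₁ (Submodule.smul_mem _ s' hcc)
        have : α ∈ A ⊓ M := ⟨hαA, hαinM⟩
        rw [hdisjAM] at this
        exact hαne this
      · obtain ⟨κ', hκ'⟩ := htor x'
        have hc : IsCoprime sα ((p : ℤ) ^ κ') := ((hpz.coprime_iff_not_dvd.2 hps).symm).pow_right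
        obtain ⟨α', β, hab⟩ := hc
        have hx'in : x' ∈ A ⊔ M := by
          have h1 : x' = α' • (sα • x') + β • (((p : ℤ) ^ κ') • x') := by
            rw [← mul_smul, ← mul_smul, ← add_smul, hab, one_smul]
          have h2 : ((p : ℤ) ^ κ') • x' = 0 := by rw [← ncast, hκ']
          have h3 : sα • x' = α - c₁ := by rw [← hww]; abel
          rw [h1, h2, smul_zero, add_zero, h3, smul_sub]
          exact sub_mem (Submodule.smul_mem _ _ (Submodule.mem_sup_left hαA))
            (Submodule.smul_mem _ _ (Submodule.mem_sup_right hc₁))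
        exact hx'notin hx'in
    · -- p ∤ mm : contradiction with hvne
      have h1 : ((p : ℤ) ^ (N - 1) * mm) • v ∈ M := by
        have e1 : (p ^ (N - 1) : ℕ) • (p • x) = (p ^ N : ℕ) • x := by
          rw [smul_smul, ← pow_succ, show N - 1 + 1 = N by omega]
        have e2 : (p ^ (N - 1) : ℕ) • (p • x) = (p ^ (N - 1) : ℕ) • (mm • v) + (p ^ (N - 1) : ℕ) • cc := by
          rw [← smul_add, hsum]
        have e3 : ((p : ℤ) ^ (N - 1) * mm) • v = (p ^ N : ℕ) • x - (p ^ (N - 1) : ℕ) • cc := by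
          rw [← e1, e2, mul_smul, ← ncast]
          abel
        rw [e3]
        exact sub_mem (hMs.1 x) (by
          have := Submodule.smul_mem M ((p : ℤ) ^ (N - 1)) hcc
          rw [← ncast] at this
          exact this)
      have h2 : ((p : ℤ) ^ (N - 1) * mm) • v = 0 := by
        have : ((p : ℤ) ^ (N - 1) * mm) • v ∈ A ⊓ M := ⟨hmemA _, h1⟩
        rw [hdisjAM] at this
        exact this
      -- p ∤ mm gives p^(N-1) • v = 0
      have hc : IsCoprime mm ((p : ℤ) ^ N) := ((hpz.coprime_iff_not_dvd.2 hpm).symm).pow_right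
      obtain ⟨α', β, hab⟩ := hc
      apply hvne
      have hNv : ((p : ℤ) ^ N) • v = 0 := by rw [← ncast, hvN]
      have e4 : (p ^ (N - 1) : ℕ) • v = ((α' * mm + β * (p : ℤ) ^ N) * (p : ℤ) ^ (N - 1)) • v := by
        rw [hab, one_mul, ncast]
      have e5 : ((α' * mm + β * (p : ℤ) ^ N) * (p : ℤ) ^ (N - 1)) • v
          = α' • (((p : ℤ) ^ (N - 1) * mm) • v) + (β * (p : ℤ) ^ (N - 1)) • (((p : ℤ) ^ N) • v) := by
        rw [← mul_smul, ← mul_smul, ← add_smul]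
        congr 1
        ring
      rw [e4, e5, h2, hNv, smul_zero, smul_zero, add_zero]
  -- torsion induction
  have hall : ∀ (κ : ℕ) (x : Γ), p ^ κ • x = 0 → x ∈ A ⊔ M := by
    intro κ
    induction κ with
    | zero =>
      intro x hx
      rw [pow_zero] at hx
      simp only [one_smul] at hx
      rw [hx]
      exact zero_mem _
    | succ κ ih =>
      intro x hx
      refine hstep x (ih (p • x) ?_)
      rw [smul_smul, ← pow_succ]
      exact hx
  have htop : A ⊔ M = ⊤ := by
    rw [eq_top_iff]
    intro x _
    obtain ⟨κ, hκ⟩ := htor x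
    exact hall κ x hκ
  exact ⟨M, ⟨disjoint_iff.2 hdisjAM, codisjoint_iff.2 htop⟩⟩

end S13
namespace S13
variable {p : ℕ}

theorem ncast2 {M : Type*} [AddCommGroup M] (p k : ℕ) (w : M) :
    (p ^ k : ℕ) • w = ((p : ℤ) ^ k) • w := by
  rw [show ((p : ℤ) ^ k) = ((p ^ k : ℕ) : ℤ) by push_cast; ring, natCast_zsmul]

theorem lemE (hp : p.Prime) {G : Type*} [AddCommGroup G] (e : ℕ) :
    ∀ (Γ : Type*) [AddCommGroup Γ],
      (∀ w : Γ, ∃ κ : ℕ, p ^ κ • w = 0) →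
      ∀ (x : Γ) (d : G), p ^ e • x = 0 → p ^ e • d = 0 →
      (∀ k, k < e → pHeight p (p ^ k • x) ≠ ⊤) →
      (∀ k, k < e → pHeight p (p ^ k • x) ≤ pHeight p (p ^ k • d)) →
      ∃ ψ : Γ →+ G, ψ x = d := by
  classical
  haveI : Fact p.Prime := ⟨hp⟩
  have hpz : Prime (p : ℤ) := Nat.prime_iff_prime_int.1 hp
  induction e using Nat.strong_induction_on with
  | _ e IH =>
  intro Γ _ htor x d hxe hde hfin hle
  by_cases he0 : e = 0
  · subst he0
    rw [pow_zero, one_smul] at hxe hde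
    exact ⟨0, by rw [hxe, hde]; simp⟩
  have he : 1 ≤ e := by omega
  set rt : ℕ → ℕ := fun k => (pHeight p (p ^ k • x)).toNat with hrtdef
  have hrc : ∀ k, k < e → ((rt k : ℕ) : ℕ∞) = pHeight p (p ^ k • x) := by
    intro k hk
    exact ENat.coe_toNat (hfin k hk)
  -- single height step
  have hstep1 : ∀ k, k + 1 < e → rt k + 1 ≤ rt (k + 1) := by
    intro k hk
    obtain ⟨y, hy⟩ := le_pHeight_iff.1 (le_of_eq (hrc k (by omega)))
    have h2 : ((rt k + 1 : ℕ) : ℕ∞) ≤ pHeight p (p ^ (k + 1) • x) := by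
      refine le_pHeight_iff.2 ⟨y, ?_⟩
      rw [show (p : ℕ) ^ (rt k + 1) = p * p ^ (rt k) by ring, mul_smul, hy, smul_smul, ← pow_succ']
    rw [← hrc (k + 1) hk] at h2
    exact_mod_cast h2
  have hsteps : ∀ (dk k : ℕ), k + dk < e → rt k + dk ≤ rt (k + dk) := by
    intro dk
    induction dk with
    | zero => intro k _; simp
    | succ dd ihd =>
      intro k hk
      have h1 := ihd k (by omega)
      have h2 := hstep1 (k + dd) (by omega)
      have e3 : rt (k + (dd + 1)) = rt ((k + dd) + 1) := rfl
      omega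
  -- the last gapless run
  set P : ℕ → Prop := fun j => ∀ i, j ≤ i → i < e → rt i + (e - 1 - i) = rt (e - 1) with hPdef
  have hPe : P (e - 1) := by
    intro i h1 h2
    have hi : i = e - 1 := by omega
    subst hi
    simp
  have hex : ∃ j, P j := ⟨e - 1, hPe⟩
  set j := Nat.find hex with hjdef
  have hPj : P j := Nat.find_spec hex
  have hjle : j ≤ e - 1 := Nat.find_min' hex hPe
  have hje : j < e := by omega
  set s := rt j with hsdef
  have hsj : j ≤ s := by
    have h1 : ((j : ℕ) : ℕ∞) ≤ pHeight p (p ^ j • x) := le_pHeight_pow_self j x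
    rw [← hrc j hje] at h1
    exact_mod_cast h1
  set N := s + (e - j) with hNdef
  have hN1 : 1 ≤ N := by omega
  have hsN : s < N := by omega
  have hgap : ∀ i, i < j → rt i + (j - i) + 1 ≤ rt j := by
    intro i hij
    have hj1 : 1 ≤ j := by omega
    have hnotP : ¬ P (j - 1) := Nat.find_min hex (by omega)
    have hfail : ¬ (rt (j - 1) + (e - 1 - (j - 1)) = rt (e - 1)) := by
      intro hEq
      apply hnotP
      intro i' h1 h2
      rcases Nat.eq_or_lt_of_le h1 with h3 | h3
      · rw [← h3]; exact hEq
      · exact hPj i' (by omega) h2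
    have hs1 : rt (j - 1) + 1 ≤ rt j := by
      have h4 := hstep1 (j - 1) (by omega)
      rw [show j - 1 + 1 = j by omega] at h4
      exact h4
    have hs2 : rt (j - 1) + 1 < rt j := by
      rcases Nat.eq_or_lt_of_le hs1 with h5 | h5
      · exfalso
        apply hfail
        have h6 := hPj j le_rfl hje
        omega
      · exact h5
    have hs3 : rt i + (j - 1 - i) ≤ rt (j - 1) := by
      have h7 := hsteps (j - 1 - i) i (by omega)
      rw [show i + (j - 1 - i) = j - 1 by omega] at h7
      exact h7
    omega
  -- choose v
  obtain ⟨v, hv⟩ := le_pHeight_iff.1 (le_of_eq (hrc j hje))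
  have hNv : p ^ N • v = 0 := by
    have h1 : p ^ N • v = p ^ (e - j) • (p ^ s • v) := by
      rw [smul_smul, ← pow_add, show e - j + s = N by omega]
    rw [h1, hv, smul_smul, ← pow_add, show e - j + j = e by omega, hxe]
  have hN1v : p ^ (N - 1) • v = p ^ (e - 1) • x := by
    rw [show N - 1 = (e - 1 - j) + s by omega, pow_add, mul_smul, hv, smul_smul, ← pow_add,
      show e - 1 - j + j = e - 1 by omega]
  have hrtE : rt (e - 1) = N - 1 := by
    have h6 := hPj j le_rfl hje
    omega
  have hvfin : pHeight p (p ^ (N - 1) • v) = ((N - 1 : ℕ) : ℕ∞) := by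
    rw [hN1v, ← hrc (e - 1) (by omega)]
    exact_mod_cast hrtE
  have hvexact : ∀ l, l < N → pHeight p (p ^ l • v) = (l : ℕ∞) := by
    intro l hl
    refine le_antisymm ?_ (le_pHeight_pow_self l v)
    by_contra hcon
    push_neg at hcon
    have h1 : ((l + 1 : ℕ) : ℕ∞) ≤ pHeight p (p ^ l • v) := by
      have := Order.add_one_le_of_lt hcon
      exact_mod_cast this
    obtain ⟨y, hy⟩ := le_pHeight_iff.1 h1
    have h2 : p ^ N • y = p ^ (N - 1) • v := by
      have h3 : p ^ (N - 1) • v = p ^ (N - 1 - l) • (p ^ l • v) := by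
        rw [smul_smul, ← pow_add, show N - 1 - l + l = N - 1 by omega]
      rw [h3, ← hy, smul_smul, ← pow_add, show N - 1 - l + (l + 1) = N by omega]
    have h3 : ((N : ℕ) : ℕ∞) ≤ pHeight p (p ^ (N - 1) • v) := le_pHeight_iff.2 ⟨y, h2⟩
    rw [hvfin] at h3
    have h4 : N ≤ N - 1 := by exact_mod_cast h3
    omega
  have hvne : p ^ (N - 1) • v ≠ 0 := by
    intro h0
    rw [h0, pHeight_zero_eq_top] at hvfin
    exact (ENat.top_ne_coe _) hvfin
  have hordv : addOrderOf v = p ^ N := by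
    have h1 : p ^ ((N - 1) + 1) • v = 0 := by
      rw [show N - 1 + 1 = N by omega]
      exact hNv
    have h2 := addOrderOf_eq_prime_pow (x := v) (n := N - 1) hvne h1
    rw [show N - 1 + 1 = N by omega] at h2
    exact h2
  have hdvdv : ∀ mm : ℤ, mm • v = 0 → ((p ^ N : ℕ) : ℤ) ∣ mm := by
    intro mm hmm
    have := addOrderOf_dvd_iff_zsmul_eq_zero.2 hmm
    rwa [hordv] at this
  -- the purity hypothesis
  have hdisjv : ∀ (mm : ℤ) (y : Γ), mm • v = p ^ N • y → mm • v = 0 := by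
    intro mm y hmy
    by_contra hne0
    have hm0 : mm ≠ 0 := by
      rintro rfl
      simp at hne0
    set n0 : ℕ := mm.natAbs with hn0
    have hn0ne : n0 ≠ 0 := by simpa [hn0] using hm0
    set lam : ℕ := n0.factorization p with hlam
    have hfact : n0 = p ^ lam * (n0 / p ^ lam) := (Nat.ordProj_mul_ordCompl_eq_self n0 p).symm
    set u : ℕ := n0 / p ^ lam with hu
    have hpu : ¬ p ∣ u := Nat.not_dvd_ordCompl hp hn0ne
    have hpui : ¬ (p : ℤ) ∣ (u : ℤ) := by
      intro hdvd
      exact hpu (by exact_mod_cast hdvd)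
    have hn0v : ((n0 : ℤ)) • v = (u : ℤ) • ((p ^ lam : ℕ) • v) := by
      rw [ncast2, ← mul_smul]
      congr 1
      rw [hfact]
      push_cast
      ring
    by_cases hlamN : N ≤ lam
    · apply hne0
      have hlam0 : (p ^ lam : ℕ) • v = 0 := by
        rw [show (p : ℕ) ^ lam = p ^ (lam - N) * p ^ N by rw [← pow_add]; congr 1; omega,
          mul_smul, hNv, smul_zero]
      have hz : ((n0 : ℤ)) • v = 0 := by rw [hn0v, hlam0, smul_zero]
      rcases Int.natAbs_eq mm with h | h
      · rw [h]; exact_mod_cast hz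
      · rw [h, neg_smul]
        rw [show ((mm.natAbs : ℤ)) • v = 0 from hz]
        simp
    · push_neg at hlamN
      have htorlam : p ^ N • ((p ^ lam : ℕ) • v) = 0 := by
        rw [smul_smul, mul_comm, ← smul_smul, hNv, smul_zero]
      have hunit := pHeight_unit_zsmul (p := p) hp hpui htorlam
      have hhn0 : pHeight p ((n0 : ℤ) • v) = (lam : ℕ∞) := by
        rw [hn0v, hunit, hvexact lam hlamN]
      have hhm : pHeight p (mm • v) = (lam : ℕ∞) := by
        rcases Int.natAbs_eq mm with h | h
        · rw [h]; exact hhn0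
        · rw [h, neg_smul, pHeight_neg]; exact hhn0
      have hNle : ((N : ℕ) : ℕ∞) ≤ pHeight p (mm • v) := le_pHeight_iff.2 ⟨y, hmy.symm⟩
      rw [hhm] at hNle
      have : N ≤ lam := by exact_mod_cast hNle
      omega
  -- complement
  obtain ⟨C, hC⟩ := complement hp htor v N hNv hvne hdisjv
  have hbot : Submodule.span ℤ ({v} : Set Γ) ⊓ C = ⊥ := disjoint_iff.1 hC.disjoint
  obtain ⟨a, ha, c, hcmem, hac⟩ := Submodule.mem_sup.1
    (by rw [codisjoint_iff.1 hC.codisjoint]; exact Submodule.mem_top :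
      x ∈ Submodule.span ℤ ({v} : Set Γ) ⊔ C)
  obtain ⟨mco, hmco⟩ := Submodule.mem_span_singleton.1 ha
  have hsum : p ^ j • a + p ^ j • c = p ^ s • v := by rw [← smul_add, hac, hv]
  have hcj : p ^ j • c = 0 := by
    have hmem1 : p ^ j • c ∈ C := by
      rw [ncast2]
      exact Submodule.smul_mem _ _ hcmem
    have hmem2 : p ^ j • c ∈ Submodule.span ℤ ({v} : Set Γ) := by
      have h8 : p ^ j • c = p ^ s • v - p ^ j • a := by rw [← hsum]; abel
      rw [h8]
      refine sub_mem ?_ ?_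
      · rw [ncast2]
        exact Submodule.smul_mem _ _ (Submodule.mem_span_singleton_self v)
      · rw [ncast2]
        exact Submodule.smul_mem _ _ ha
    have h9 : p ^ j • c ∈ Submodule.span ℤ ({v} : Set Γ) ⊓ C := ⟨hmem2, hmem1⟩
    rw [hbot] at h9
    exact h9
  have haj : p ^ j • a = p ^ s • v := by
    rw [← hsum, hcj, add_zero]
  have hrel : (((p : ℤ) ^ j) * mco - (p : ℤ) ^ s) • v = 0 := by
    rw [sub_smul, mul_smul, hmco, ← ncast2, ← ncast2, haj, sub_self]
  obtain ⟨t, ht⟩ := hdvdv _ hrel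
  have hpjne : ((p : ℤ) ^ j) ≠ 0 := pow_ne_zero _ (by exact_mod_cast hp.pos.ne')
  have hmcoW : mco = (p : ℤ) ^ (s - j) * (1 + (p : ℤ) ^ (e - j) * t) := by
    apply mul_left_cancel₀ hpjne
    have e3 : ((p ^ N : ℕ) : ℤ) = (p : ℤ) ^ N := by push_cast; ring
    have ht' : (p : ℤ) ^ j * mco = (p : ℤ) ^ s + (p : ℤ) ^ N * t := by
      rw [e3] at ht
      linarith
    have e1 : (p : ℤ) ^ j * (p : ℤ) ^ (s - j) = (p : ℤ) ^ s := by
      rw [← pow_add]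
      congr 1
      omega
    have e2 : (p : ℤ) ^ s * (p : ℤ) ^ (e - j) = (p : ℤ) ^ N := by
      rw [← pow_add]
    rw [ht', ← mul_assoc, e1, mul_add, mul_one, ← mul_assoc, e2]
  have hWnd : ¬ (p : ℤ) ∣ (1 + (p : ℤ) ^ (e - j) * t) := by
    intro hdvd
    have h1 : (p : ℤ) ∣ (p : ℤ) ^ (e - j) * t :=
      Dvd.dvd.mul_right (dvd_pow_self _ (by omega : e - j ≠ 0)) t
    have h2 : (p : ℤ) ∣ 1 := by
      have := dvd_sub hdvd h1
      simpa using this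
    exact hpz.not_dvd_one h2
  -- the target side
  obtain ⟨u', hu'⟩ := le_pHeight_iff.1 (le_trans (le_of_eq (hrc j hje)) (hle j hje))
  have hNu' : (p : ℤ) ^ N • u' = 0 := by
    rw [← ncast2, show (p : ℕ) ^ N = p ^ (e - j) * p ^ s by rw [← pow_add]; congr 1; omega,
      mul_smul, hu', smul_smul, ← pow_add, show e - j + j = e by omega, hde]
  obtain ⟨W', β, hWW⟩ := ((hpz.coprime_iff_not_dvd.2 hWnd).symm).pow_right (n := e)
  -- hcomp for cyclicHom
  have hcomp : ∀ mm : ℤ, mm • v = 0 → mm • (W' • u') = 0 := by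
    intro mm hmm0
    obtain ⟨k, hk⟩ := hdvdv mm hmm0
    rw [hk, ← mul_smul]
    have e6 : ((p ^ N : ℕ) : ℤ) * k * W' = (k * W') * (p : ℤ) ^ N := by push_cast; ring
    rw [e6, mul_smul, hNu', smul_zero]
  obtain ⟨θ, hθ⟩ := cyclicHom v ((W' : ℤ) • u') hcomp
  -- K1
  have hK1 : mco • ((W' : ℤ) • u') = ((p : ℤ) ^ (s - j)) • u' := by
    rw [← mul_smul, hmcoW]
    have h1 : (p : ℤ) ^ (s - j) * (1 + (p : ℤ) ^ (e - j) * t) * W'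
        = (p : ℤ) ^ (s - j) * (1 - β * (p : ℤ) ^ e) := by
      have h2 : (1 + (p : ℤ) ^ (e - j) * t) * W' = 1 - β * (p : ℤ) ^ e := by
        linear_combination hWW
      rw [mul_assoc, h2]
    rw [h1, mul_sub, mul_one, sub_smul]
    have h3 : ((p : ℤ) ^ (s - j) * (β * (p : ℤ) ^ e)) • u' = 0 := by
      have e4 : (p : ℤ) ^ (s - j) * (β * (p : ℤ) ^ e) = β * (p : ℤ) ^ N := by
        rw [show (p : ℤ) ^ N = (p : ℤ) ^ (s - j) * (p : ℤ) ^ e by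
          rw [← pow_add]; congr 1; omega]
        ring
      rw [e4, mul_smul, hNu', smul_zero]
    rw [h3, sub_zero]
  -- heights of the components, i < j
  have hta : ∀ i, i < j → pHeight p (p ^ i • a) = ((s - j + i : ℕ) : ℕ∞) := by
    intro i hij
    have e5 : p ^ i • a = (1 + (p : ℤ) ^ (e - j) * t) • ((p ^ (s - j + i) : ℕ) • v) := by
      rw [← hmco, ncast2 p i, ← mul_smul, ncast2, ← mul_smul, hmcoW]
      congr 1
      rw [show (p : ℤ) ^ (s - j + i) = (p : ℤ) ^ i * (p : ℤ) ^ (s - j) by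
        rw [← pow_add]; congr 1; omega]
      ring
    have htorv : p ^ N • ((p ^ (s - j + i) : ℕ) • v) = 0 := by
      rw [smul_smul, mul_comm, ← smul_smul, hNv, smul_zero]
    rw [e5, pHeight_unit_zsmul hp hWnd htorv, hvexact (s - j + i) (by omega)]
  have hcu : ∀ i, i < j → pHeight p (p ^ i • c) ≤ ((rt i : ℕ) : ℕ∞) := by
    intro i hij
    by_contra hcon
    push_neg at hcon
    have h1 : ((rt i : ℕ) : ℕ∞) < pHeight p (p ^ i • a) := by
      rw [hta i hij]
      have := hgap i hij
      have h2 : rt i < s - j + i := by omega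
      exact_mod_cast h2
    have hsum_i : p ^ i • a + p ^ i • c = p ^ i • x := by rw [← smul_add, hac]
    have h2 := min_pHeight_le_add (p := p) (p ^ i • a) (p ^ i • c)
    rw [hsum_i] at h2
    have h3 : ((rt i : ℕ) : ℕ∞) < pHeight p (p ^ i • x) :=
      lt_of_lt_of_le (lt_min h1 hcon) h2
    rw [← hrc i (by omega)] at h3
    exact lt_irrefl _ h3
  -- d-side pieces
  set d2 : G := ((p : ℤ) ^ (s - j)) • u' with hd2def
  set d1 : G := d - d2 with hd1def
  have hd1ord : p ^ j • d1 = 0 := by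
    have h1 : p ^ j • d2 = p ^ j • d := by
      rw [hd2def, ncast2 p j (((p : ℤ) ^ (s - j)) • u'), ← mul_smul,
        show (p : ℤ) ^ j * (p : ℤ) ^ (s - j) = (p : ℤ) ^ s by rw [← pow_add]; congr 1; omega,
        ← ncast2, hu']
    rw [hd1def, smul_sub, h1, sub_self]
  have hd2ht : ∀ i, i < j → ((s - j + i : ℕ) : ℕ∞) ≤ pHeight p (p ^ i • d2) := by
    intro i hij
    have e7 : p ^ i • d2 = (p ^ (s - j + i) : ℕ) • u' := by
      rw [hd2def, ncast2 p i, ← mul_smul, ncast2 p (s - j + i)]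
      congr 1
      rw [← pow_add]
      congr 1
      omega
    rw [e7]
    exact le_pHeight_pow_self _ _
  have hd1ht : ∀ i, i < j → ((rt i : ℕ) : ℕ∞) ≤ pHeight p (p ^ i • d1) := by
    intro i hij
    have h1 : ((rt i : ℕ) : ℕ∞) ≤ pHeight p (p ^ i • d) := by
      rw [hrc i (by omega)]
      exact hle i (by omega)
    have h2 : ((rt i : ℕ) : ℕ∞) ≤ pHeight p (p ^ i • d2) := by
      refine le_trans ?_ (hd2ht i hij)
      have := hgap i hij
      have h3 : rt i ≤ s - j + i := by omega
      exact_mod_cast h3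
    have h4 := min_pHeight_le_sub (p := p) (p ^ i • d) (p ^ i • d2)
    rw [← smul_sub, ← hd1def] at h4
    exact le_trans (le_min h1 h2) h4
  -- subtype element of C
  set csub : C := ⟨c, hcmem⟩ with hcsubdef
  have hcoe : ∀ k : ℕ, ((p ^ k • csub : C) : Γ) = p ^ k • c := by
    intro k
    rfl
  have hcsub_le : ∀ k, k < j → pHeight p (p ^ k • csub) ≤ ((rt k : ℕ) : ℕ∞) := by
    intro k hk
    refine le_trans ?_ (hcu k hk)
    have := pHeight_le_hom (p := p) (C.subtype.toAddMonoidHom) (p ^ k • csub)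
    rw [show (C.subtype.toAddMonoidHom) (p ^ k • csub) = p ^ k • c from hcoe k] at this
    exact this
  have hcsubj : p ^ j • csub = 0 := by
    apply Subtype.ext
    rw [hcoe]
    exact hcj
  have hIH := IH j hje C (fun w => by
      obtain ⟨κ, hκ⟩ := htor (w : Γ)
      exact ⟨κ, Subtype.ext (by simpa using hκ)⟩)
    csub d1 hcsubj hd1ord
    (fun k hk => by
      have h1 := hcsub_le k hk
      intro htop
      rw [htop] at h1
      exact (ENat.top_ne_coe _) (le_antisymm h1 le_top))
    (fun k hk => le_trans (hcsub_le k hk) (hd1ht k hk))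
  obtain ⟨ψ', hψ'⟩ := hIH
  -- assemble
  set πh := (Submodule.linearProjOfIsCompl _ C hC).toAddMonoidHom with hπdef
  set ρh := (Submodule.linearProjOfIsCompl C _ hC.symm).toAddMonoidHom with hρdef
  refine ⟨θ.comp πh + ψ'.comp ρh, ?_⟩
  have hπx : Submodule.linearProjOfIsCompl _ C hC x = ⟨a, ha⟩ := by
    rw [← hac, map_add,
      (show Submodule.linearProjOfIsCompl _ C hC c = 0 from
        Submodule.projectionOnto_apply_of_mem_right hC hcmem), add_zero]
    exact Submodule.linearProjOfIsCompl_apply_left hC ⟨a, ha⟩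
  have hρx : Submodule.linearProjOfIsCompl C _ hC.symm x = ⟨c, hcmem⟩ := by
    rw [← hac, map_add,
      (show Submodule.linearProjOfIsCompl C _ hC.symm a = 0 from
        Submodule.projectionOnto_apply_of_mem_right hC.symm ha), zero_add]
    exact Submodule.linearProjOfIsCompl_apply_left hC.symm ⟨c, hcmem⟩
  have hamem : mco • v ∈ Submodule.span ℤ ({v} : Set Γ) :=
    Submodule.smul_mem _ mco (Submodule.mem_span_singleton_self v)
  have hsub : (⟨a, ha⟩ : Submodule.span ℤ ({v} : Set Γ)) = ⟨mco • v, hamem⟩ :=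
    Subtype.ext hmco.symm
  show θ (πh x) + ψ' (ρh x) = d
  rw [hπdef, hρdef]
  show θ ((Submodule.linearProjOfIsCompl _ C hC) x)
      + ψ' ((Submodule.linearProjOfIsCompl C _ hC.symm) x) = d
  rw [hπx, hρx, ← hcsubdef, hψ', hsub, hθ mco hamem, hK1, hd1def, hd2def]
  abel

end S13
namespace S13

theorem nsmul_zsmul_comm {M : Type*} [AddCommGroup M] (a : ℕ) (b : ℤ) (w : M) :
    a • (b • w) = b • (a • w) := by
  rw [← natCast_zsmul (b • w) a, ← natCast_zsmul w a, ← mul_smul, ← mul_smul, mul_comm]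

theorem repr_full {G : Type*} [AddCommGroup G] {n : ℕ} (z : Fin n → G) (x : G)
    (hx : x ∈ ⨆ i, AddSubgroup.zmultiples (z i)) :
    ∃ c : Fin n → G, (∀ j, c j ∈ AddSubgroup.zmultiples (z j)) ∧ ∑ j, c j = x := by
  classical
  refine AddSubgroup.iSup_induction (C := fun w => ∃ c : Fin n → G,
    (∀ j, c j ∈ AddSubgroup.zmultiples (z j)) ∧ ∑ j, c j = w) _ hx ?_ ?_ ?_
  · intro i w hw
    refine ⟨fun k => if k = i then w else 0, ?_, ?_⟩
    · intro j
      by_cases h : j = i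
      · subst h; simpa using hw
      · simp [h, zero_mem]
    · simp
  · exact ⟨0, fun j => zero_mem _, by simp⟩
  · rintro y1 y2 ⟨c1, hc1, rfl⟩ ⟨c2, hc2, rfl⟩
    exact ⟨c1 + c2, fun j => add_mem (hc1 j) (hc2 j), by
      rw [← Finset.sum_add_distrib]; rfl⟩

theorem repr_ne {G : Type*} [AddCommGroup G] {n : ℕ} (z : Fin n → G) (i : Fin n) (x : G)
    (hx : x ∈ ⨆ (jj : Fin n) (_ : jj ≠ i), AddSubgroup.zmultiples (z jj)) :
    ∃ c : Fin n → G, (∀ j, c j ∈ AddSubgroup.zmultiples (z j)) ∧ c i = 0 ∧ ∑ j, c j = x := by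
  classical
  refine AddSubgroup.iSup_induction (C := fun w => ∃ c : Fin n → G,
    (∀ j, c j ∈ AddSubgroup.zmultiples (z j)) ∧ c i = 0 ∧ ∑ j, c j = w) _ hx ?_ ?_ ?_
  · intro jj w hw
    by_cases h : jj = i
    · subst h
      have hbot : (⨆ (_ : jj ≠ jj), AddSubgroup.zmultiples (z jj)) = ⊥ := by simp
      rw [hbot] at hw
      rw [AddSubgroup.mem_bot] at hw
      exact ⟨0, fun j => zero_mem _, rfl, by simp [hw]⟩
    · rw [iSup_pos h] at hw
      refine ⟨fun k => if k = jj then w else 0, ?_, ?_, ?_⟩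
      · intro j
        by_cases hj : j = jj
        · subst hj; simpa using hw
        · simp [hj, zero_mem]
      · simp [Ne.symm h]
      · simp
  · exact ⟨0, fun j => zero_mem _, rfl, by simp⟩
  · rintro y1 y2 ⟨c1, hc1, hc1i, rfl⟩ ⟨c2, hc2, hc2i, rfl⟩
    exact ⟨c1 + c2, fun j => add_mem (hc1 j) (hc2 j), by simp [hc1i, hc2i], by
      rw [← Finset.sum_add_distrib]; rfl⟩

theorem comp_zero {G : Type*} [AddCommGroup G] {n : ℕ} (z : Fin n → G)
    (hind : iSupIndep (fun i => AddSubgroup.zmultiples (z i)))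
    (u : Fin n → G) (hu : ∀ j, u j ∈ AddSubgroup.zmultiples (z j)) (hsum : ∑ j, u j = 0) :
    ∀ j, u j = 0 := by
  classical
  intro j
  have h1 : u j + ∑ k ∈ Finset.univ.erase j, u k = 0 := by
    rw [Finset.add_sum_erase Finset.univ u (Finset.mem_univ j)]
    exact hsum
  have h2 : u j ∈ ⨆ (k : Fin n) (_ : k ≠ j), AddSubgroup.zmultiples (z k) := by
    have h3 : u j = -∑ k ∈ Finset.univ.erase j, u k := by
      rw [eq_neg_iff_add_eq_zero]
      exact h1
    rw [h3]
    refine neg_mem (AddSubgroup.sum_mem _ ?_)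
    intro k hk
    have hkj : k ≠ j := Finset.ne_of_mem_erase hk
    exact (le_iSup (fun k => ⨆ (_ : k ≠ j), AddSubgroup.zmultiples (z k)) k)
      ((le_iSup (fun (_ : k ≠ j) => AddSubgroup.zmultiples (z k)) hkj) (hu k))
  have h4 : u j ∈ AddSubgroup.zmultiples (z j) ⊓ ⨆ (k : Fin n) (_ : k ≠ j), AddSubgroup.zmultiples (z k) := ⟨hu j, h2⟩
  have h5 := (hind j).le_bot h4
  rwa [AddSubgroup.mem_bot] at h5


def IsPGrp (p : ℕ) (G : Type*) [AddCommGroup G] : Prop :=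
  ∀ x : G, ∃ n : ℕ, p ^ n • x = 0

def InW {G : Type*} [AddCommGroup G] (H : AddSubgroup G) : Prop :=
  ∀ f : H →+ H, ∃ g : G →+ G, ∀ x : H, g x = (f x : G)

end S13


theorem stmt13 {G : Type*} [AddCommGroup G] (p : ℕ) (hp : p.Prime) (hG : IsPGrp p G)
    (n : ℕ) (z : Fin n → G) (e : Fin n → ℕ) (hord : ∀ i, addOrderOf (z i) = p ^ e i)
    (hind : iSupIndep (fun i => zmultiples (z i)))
    (H : AddSubgroup G) (hH : H = ⨆ i, zmultiples (z i))
    (hUlm : ∀ x ∈ H, (∀ m : ℕ, ∃ y : G, p ^ m • y = x) → x = 0)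
    (ha : ∀ i j, e j ≤ e i →
      (∀ k : ℕ, pHeight p (p ^ k • z i) ≤ pHeight p (p ^ k • z j)) ∧
      (∀ k : ℕ, pHeight p (p ^ k • z j) ≤ pHeight p (p ^ k • (p ^ (e i - e j) • z i))))
    (hval : ∀ c : Fin n → G, (∀ i, c i ∈ zmultiples (z i)) →
      pHeight p (∑ i, c i) = ⨅ i, pHeight p (c i)) :
    InW H := by
  
  classical
  subst hH
  haveI : Fact p.Prime := ⟨hp⟩
  have hpz : Prime (p : ℤ) := Nat.prime_iff_prime_int.1 hp
  set HH : AddSubgroup G := ⨆ i, zmultiples (z i) with hHH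
  intro f
  have hzmem : ∀ i, z i ∈ HH := fun i =>
    (le_iSup (fun i => zmultiples (z i)) i) (AddSubgroup.mem_zmultiples (z i))
  have hordz : ∀ i, p ^ e i • z i = 0 := by
    intro i
    rw [← hord i]
    exact addOrderOf_nsmul_eq_zero (z i)
  have hzne : ∀ i, ∀ k, k < e i → p ^ k • z i ≠ 0 := by
    intro i k hk h0
    have h1 : addOrderOf (z i) ∣ p ^ k := addOrderOf_dvd_of_nsmul_eq_zero h0
    rw [hord i] at h1
    have h2 := (Nat.pow_dvd_pow_iff_le_right hp.one_lt).1 h1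
    omega
  have hfinz : ∀ i, ∀ k, k < e i → pHeight p (p ^ k • z i) ≠ ⊤ := by
    intro i k hk htop
    apply hzne i k hk
    refine hUlm _ (nsmul_mem (hzmem i) _) ?_
    intro m
    exact S13.le_pHeight_iff.1 (htop ▸ le_top)
  -- the images of the generators
  set zel : ∀ i : Fin n, HH := fun i => ⟨z i, hzmem i⟩ with hzel
  set dd : Fin n → G := fun i => ((f (zel i) : HH) : G) with hdd
  have hdmem : ∀ i, (dd i) ∈ HH := fun i => (f (zel i)).2
  have hdeord : ∀ i, p ^ e i • dd i = 0 := by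
    intro i
    have h1 : p ^ e i • (zel i) = 0 := by
      apply Subtype.ext
      simpa using hordz i
    have h2 : p ^ e i • dd i = ((p ^ e i • f (zel i) : HH) : G) := by push_cast; rfl
    rw [h2, ← map_nsmul, h1, map_zero, ZeroMemClass.coe_zero]
  -- f does not decrease generator heights
  have hdht : ∀ i, ∀ k, k < e i → pHeight p (p ^ k • z i) ≤ pHeight p (p ^ k • dd i) := by
    intro i k hk
    obtain ⟨c, hc, hcsum⟩ := S13.repr_full z (dd i) (hdmem i)
    have hcomp0 : ∀ jj, p ^ e i • c jj = 0 := by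
      refine S13.comp_zero z hind (fun jj => p ^ e i • c jj)
        (fun jj => nsmul_mem (hc jj) _) ?_
      rw [← Finset.smul_sum, hcsum, hdeord i]
    have hksum : p ^ k • dd i = ∑ jj, p ^ k • c jj := by rw [← Finset.smul_sum, hcsum]
    refine S13.enat_le_of (fun m hm => ?_)
    rw [hksum]
    refine S13.le_pHeight_finsum (fun jj _ => ?_)
    refine le_trans hm ?_
    obtain ⟨mj, hmj⟩ := AddSubgroup.mem_zmultiples_iff.1 (hc jj)
    by_cases hej : e jj ≤ e i
    · have h1 : p ^ k • c jj = mj • (p ^ k • z jj) := by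
        rw [← hmj, S13.nsmul_zsmul_comm]
      calc pHeight p (p ^ k • z i) ≤ pHeight p (p ^ k • z jj) := (ha i jj hej).1 k
      _ ≤ pHeight p (mj • (p ^ k • z jj)) := S13.pHeight_le_zsmul _ _
      _ = pHeight p (p ^ k • c jj) := by rw [← h1]
    · push_neg at hej
      -- extract divisibility
      have h0 : ((p ^ e i : ℕ) : ℤ) • (mj • z jj) = 0 := by
        rw [natCast_zsmul, hmj]
        exact hcomp0 jj
      have h1 : (((p : ℤ) ^ e i) * mj) • z jj = 0 := by
        rw [mul_smul, ← h0]
        congr 1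
      have h2 : ((p ^ e jj : ℕ) : ℤ) ∣ ((p : ℤ) ^ e i) * mj := by
        have := addOrderOf_dvd_iff_zsmul_eq_zero.2 h1
        rwa [hord jj] at this
      have h3 : (p : ℤ) ^ (e jj - e i) ∣ mj := by
        have h4 : (p : ℤ) ^ (e jj - e i) * (p : ℤ) ^ e i ∣ mj * (p : ℤ) ^ e i := by
          rw [← pow_add, show e jj - e i + e i = e jj by omega]
          have h5 : ((p ^ e jj : ℕ) : ℤ) = (p : ℤ) ^ e jj := by push_cast; ring
          rw [← h5]
          exact Dvd.dvd.trans h2 (by rw [mul_comm])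
        exact (mul_dvd_mul_iff_right (pow_ne_zero _ (by exact_mod_cast hp.pos.ne' :
          (p : ℤ) ≠ 0))).1 h4
      obtain ⟨mt, hmt⟩ := h3
      have h6 : c jj = mt • ((p ^ (e jj - e i) : ℕ) • z jj) := by
        rw [← hmj, hmt, S13.ncast2, ← mul_smul, mul_comm]
      have h7 : p ^ k • c jj = mt • (p ^ k • ((p ^ (e jj - e i) : ℕ) • z jj)) := by
        rw [h6, S13.nsmul_zsmul_comm]
      calc pHeight p (p ^ k • z i)
          ≤ pHeight p (p ^ k • (p ^ (e jj - e i) • z jj)) := (ha jj i (le_of_lt hej)).2 k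
      _ ≤ pHeight p (mt • (p ^ k • ((p ^ (e jj - e i) : ℕ) • z jj))) := S13.pHeight_le_zsmul _ _
      _ = pHeight p (p ^ k • c jj) := by rw [← h7]
  -- corrections ψ i
  have hψex : ∀ i : Fin n, ∃ ψ : G →+ G, ψ (z i) = dd i ∧ ∀ jj, jj ≠ i → ψ (z jj) = 0 := by
    intro i
    set Hni : AddSubgroup G := ⨆ (jj : Fin n) (_ : jj ≠ i), zmultiples (z jj) with hHni
    set mk : G →+ G ⧸ Hni := QuotientAddGroup.mk' Hni with hmk
    have hQtor : ∀ w : G ⧸ Hni, ∃ κ, p ^ κ • w = 0 := by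
      intro w
      obtain ⟨y, rfl⟩ := QuotientAddGroup.mk'_surjective Hni w
      obtain ⟨κ, hκ⟩ := hG y
      exact ⟨κ, by rw [← map_nsmul, hκ, map_zero]⟩
    have hqle : ∀ k, pHeight p (p ^ k • (mk (z i))) ≤ pHeight p (p ^ k • z i) := by
      intro k
      by_cases hk : k < e i
      case neg =>
        push_neg at hk
        have h0 : p ^ k • z i = 0 := by
          rw [show (p : ℕ) ^ k = p ^ (k - e i) * p ^ e i by rw [← pow_add]; congr 1; omega,
            mul_smul, hordz i, smul_zero]
        rw [h0, S13.pHeight_zero_eq_top]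
        exact le_top
      case pos =>
      refine S13.enat_le_of (fun m hm => ?_)
      obtain ⟨yq, hyq⟩ := S13.le_pHeight_iff.1 hm
      obtain ⟨y, rfl⟩ := QuotientAddGroup.mk'_surjective Hni yq
      rw [← map_nsmul, ← map_nsmul] at hyq
      have h2 : mk (p ^ m • y - p ^ k • z i) = 0 := by
        rw [map_sub, hyq, sub_self]
      have hmem : p ^ m • y - p ^ k • z i ∈ Hni := by
        have h3 : p ^ m • y - p ^ k • z i ∈ mk.ker := h2
        rwa [hmk, QuotientAddGroup.ker_mk'] at h3
      obtain ⟨c, hc, hci, hcsum⟩ := S13.repr_ne z i _ hmem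
      set c' : Fin n → G := Function.update c i (p ^ k • z i) with hc'
      have hc'mem : ∀ jj, c' jj ∈ zmultiples (z jj) := by
        intro jj
        by_cases h : jj = i
        · subst h
          rw [hc', Function.update_self]
          exact nsmul_mem (AddSubgroup.mem_zmultiples (z jj)) _
        · rw [hc', Function.update_of_ne h]
          exact hc jj
      have hc'sum : ∑ jj, c' jj = p ^ m • y := by
        rw [hc', Finset.sum_update_of_mem (Finset.mem_univ i)]
        have h4 : ∑ jj ∈ Finset.univ \ {i}, c jj = ∑ jj, c jj := by
          refine Finset.sum_subset (Finset.sdiff_subset) ?_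
          intro xx _ hxx
          have : xx = i := by
            by_contra hne
            exact hxx (Finset.mem_sdiff.2 ⟨Finset.mem_univ xx, by simp [hne]⟩)
          rw [this, hci]
        rw [h4, hcsum]
        abel
      have hval' := hval c' hc'mem
      rw [hc'sum] at hval'
      have h5 : ((m : ℕ) : ℕ∞) ≤ pHeight p (p ^ m • y) := S13.le_pHeight_iff.2 ⟨y, rfl⟩
      rw [hval'] at h5
      refine le_trans h5 (le_trans (iInf_le _ i) ?_)
      rw [hc', Function.update_self]
    have hord_mk : p ^ e i • mk (z i) = 0 := by rw [← map_nsmul, hordz i, map_zero]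
    obtain ⟨ψq, hψq⟩ := S13.lemE hp (e i) (G ⧸ Hni) hQtor (mk (z i)) (dd i) hord_mk (hdeord i)
      (fun k hk htop => hfinz i k hk (top_le_iff.1 (htop ▸ hqle k)))
      (fun k hk => le_trans (hqle k) (hdht i k hk))
    refine ⟨ψq.comp mk, by rw [AddMonoidHom.comp_apply, hψq], ?_⟩
    intro jj hjj
    have hzj : mk (z jj) = 0 := by
      have h6 : z jj ∈ Hni :=
        (le_iSup (fun jj => ⨆ (_ : jj ≠ i), zmultiples (z jj)) jj)
          ((le_iSup (fun (_ : jj ≠ i) => zmultiples (z jj)) hjj)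
            (AddSubgroup.mem_zmultiples (z jj)))
      have h7 : z jj ∈ mk.ker := by rwa [hmk, QuotientAddGroup.ker_mk']
      exact h7
    rw [AddMonoidHom.comp_apply, hzj, map_zero]
  choose ψ hψ1 hψ2 using hψex
  refine ⟨∑ i, ψ i, ?_⟩
  have hgz : ∀ i, (∑ i', ψ i') (z i) = dd i := by
    intro i
    rw [AddMonoidHom.finset_sum_apply]
    rw [Finset.sum_eq_single i]
    · exact hψ1 i
    · intro b _ hb
      exact hψ2 b i (Ne.symm hb)
    · intro h
      exact absurd (Finset.mem_univ i) h
  have key : ∀ (w : G) (hw : w ∈ HH), (∑ i', ψ i') w = ((f ⟨w, hw⟩ : HH) : G) := by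
    intro w hw
    refine AddSubgroup.iSup_induction' (C := fun w hw =>
      (∑ i', ψ i') w = ((f ⟨w, hw⟩ : HH) : G)) (fun i => zmultiples (z i)) ?_ ?_ ?_ hw
    · intro i w' hw'
      obtain ⟨mw, hmw⟩ := AddSubgroup.mem_zmultiples_iff.1 hw'
      have hsub : ∀ (hww : w' ∈ HH), (⟨w', hww⟩ : HH) = mw • zel i := by
        intro hww
        apply Subtype.ext
        show w' = ((mw • zel i : HH) : G)
        rw [← hmw]
        push_cast
        rfl
      rw [hsub]
      calc (∑ i', ψ i') w' = (∑ i', ψ i') (mw • z i) := by rw [hmw]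
      _ = mw • (∑ i', ψ i') (z i) := map_zsmul _ _ _
      _ = mw • dd i := by rw [hgz i]
      _ = ((mw • f (zel i) : HH) : G) := by push_cast; rfl
      _ = ((f (mw • zel i) : HH) : G) := by rw [map_zsmul]
    · have h0 : ∀ (hww : (0:G) ∈ HH), (⟨(0:G), hww⟩ : HH) = 0 := fun _ => Subtype.ext rfl
      show (∑ i' : Fin n, ψ i') 0 = ((f ⟨0, zero_mem HH⟩ : HH) : G)
      rw [map_zero, h0, map_zero, ZeroMemClass.coe_zero]
    · intro y1 y2 hy1 hy2 hC1 hC2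
      have hadd : ∀ (hww : y1 + y2 ∈ HH), (⟨y1 + y2, hww⟩ : HH) = ⟨y1, hy1⟩ + ⟨y2, hy2⟩ :=
        fun _ => Subtype.ext rfl
      have hC1' : (∑ i' : Fin n, ψ i') y1 = ((f ⟨y1, hy1⟩ : HH) : G) := hC1
      have hC2' : (∑ i' : Fin n, ψ i') y2 = ((f ⟨y2, hy2⟩ : HH) : G) := hC2
      show (∑ i' : Fin n, ψ i') (y1 + y2) = ((f ⟨y1 + y2, add_mem hy1 hy2⟩ : HH) : G)
      rw [map_add, hC1', hC2', hadd, map_add]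
      push_cast
      rfl
  intro xel
  have h9 := key xel.1 xel.2
  rw [show (⟨xel.1, xel.2⟩ : HH) = xel from Subtype.ext rfl] at h9
  exact h9
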